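/- Let (C₂, C₁) be a weight structure w on a triangulated category C with C₁[1] = C₁ (where C₁ = C_{w≥0}, C₂ = C_{w≤0}). Then C₂[1] = C₂ as well. -/

import Mathlib

open CategoryTheory CategoryTheory.Limits CategoryTheory.Pretriangulated ZeroObject

universe w' v u

variable (C : Type u) [Category.{v} C] [HasZeroObject C] [HasShift C ℤ]
  [Preadditive C] [∀ n : ℤ, (shiftFunctor C n).Additive] [Pretriangulated C]

/-- A t-structure `t = (C_{t≤0}, C_{t≥0})` on a triangulated category, in the homological
convention of the paper.  `le` is the class `C_{t≤0}` and `ge` is the class `C_{t≥0}`.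
The condition `C_{t≤0} ⊆ C_{t≤0}[1]` is encoded as `le X → le (X⟦-1⟧)` (the classes being
closed under isomorphism), and `C_{t≥0}[1] ⊆ C_{t≥0}` as `ge X → ge (X⟦1⟧)`.
The class `C_{t≤i} = C_{t≤0}[i]` is `fun X => le (X⟦-i⟧)` and similarly for `C_{t≥i}`. -/
structure PaperTStructure where
  /-- the class `C_{t≤0}` -/
  le : C → Prop
  /-- the class `C_{t≥0}` -/
  ge : C → Prop
  le_iso : ∀ {X Y : C}, (X ≅ Y) → le X → le Y
  ge_iso : ∀ {X Y : C}, (X ≅ Y) → ge X → ge Y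
  le_shift : ∀ X : C, le X → le (X⟦(-1 : ℤ)⟧)
  ge_shift : ∀ X : C, ge X → ge (X⟦(1 : ℤ)⟧)
  /-- `C_{t≥0}[1] ⊥ C_{t≤0}` -/
  orth : ∀ (X Y : C), ge X → le Y → ∀ f : X⟦(1 : ℤ)⟧ ⟶ Y, f = 0
  /-- every object `M` admits a `t`-decomposition `L → M → R → L[1]` with `L ∈ C_{t≥0}`,
  `R ∈ C_{t≤0}[-1]` (i.e. `R⟦1⟧ ∈ C_{t≤0}`) -/
  decomp : ∀ M : C, ∃ (L R : C) (f : L ⟶ M) (g : M ⟶ R) (h : R ⟶ L⟦(1 : ℤ)⟧),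
    (Triangle.mk f g h ∈ distTriang C) ∧ ge L ∧ le (R⟦(1 : ℤ)⟧)

/-- A weight structure `w = (C_{w≤0}, C_{w≥0})` on a triangulated category, in the homological
convention of the paper.  `le` is the class `C_{w≤0}` and `ge` is the class `C_{w≥0}`;
both are retraction-closed.  `C_{w≤i} = C_{w≤0}[i]` is `fun X => le (X⟦-i⟧)`, similarly `ge`. -/
structure PaperWeightStructure where
  /-- the class `C_{w≤0}` -/
  le : C → Prop
  /-- the class `C_{w≥0}` -/
  ge : C → Prop
  le_retract : ∀ (X Y : C), le Y → (∃ (i : X ⟶ Y) (r : Y ⟶ X), i ≫ r = 𝟙 X) → le X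
  ge_retract : ∀ (X Y : C), ge Y → (∃ (i : X ⟶ Y) (r : Y ⟶ X), i ≫ r = 𝟙 X) → ge X
  le_shift : ∀ X : C, le X → le (X⟦(-1 : ℤ)⟧)
  ge_shift : ∀ X : C, ge X → ge (X⟦(1 : ℤ)⟧)
  /-- `C_{w≤0} ⊥ C_{w≥0}[1]` -/
  orth : ∀ (X Y : C), le X → ge Y → ∀ f : X ⟶ Y⟦(1 : ℤ)⟧, f = 0
  /-- every object `M` admits a weight decomposition `L → M → R → L[1]` with `L ∈ C_{w≤0}`,
  `R ∈ C_{w≥0}[1]` (i.e. `R⟦-1⟧ ∈ C_{w≥0}`) -/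
  decomp : ∀ M : C, ∃ (L R : C) (f : L ⟶ M) (g : M ⟶ R) (h : R ⟶ L⟦(1 : ℤ)⟧),
    (Triangle.mk f g h ∈ distTriang C) ∧ le L ∧ ge (R⟦(-1 : ℤ)⟧)

/-- A class of objects is extension-closed if it contains `0` and for every distinguished
triangle `X → Y → Z → X[1]` with `X, Z` in the class, `Y` lies in the class. -/
def ExtClosed (P : C → Prop) : Prop :=
  P (0 : C) ∧ ∀ T : Triangle C, (T ∈ distTriang C) → P T.obj₁ → P T.obj₃ → P T.obj₂

/-- A class of objects is retraction-closed if it contains all retracts of its elements. -/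
def RetractClosed (P : C → Prop) : Prop :=
  ∀ X Y : C, P Y → (∃ (i : X ⟶ Y) (r : Y ⟶ X), i ≫ r = 𝟙 X) → P X

/-- if `w` is a weight structure with `C_{w≥0}[1] = C_{w≥0}`, then also
`C_{w≤0}[1] = C_{w≤0}` (shift-stability of the classes is expressed objectwise, the classes
being closed under isomorphism). -/
theorem stmt7 (w : PaperWeightStructure C)
    (h : ∀ X : C, w.ge (X⟦(1 : ℤ)⟧) ↔ w.ge X) :
    ∀ X : C, w.le (X⟦(1 : ℤ)⟧) ↔ w.le X := by
  have leiso : ∀ {X Y : C}, (X ≅ Y) → w.le X → w.le Y := fun e hX =>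
    w.le_retract _ _ hX ⟨e.inv, e.hom, e.inv_hom_id⟩
  have geiso : ∀ {X Y : C}, (X ≅ Y) → w.ge X → w.ge Y := fun e hX =>
    w.ge_retract _ _ hX ⟨e.inv, e.hom, e.inv_hom_id⟩
  intro X
  constructor
  · intro hX
    exact leiso ((shiftEquiv C (1 : ℤ)).unitIso.app X).symm (w.le_shift _ hX)
  · intro hX
    obtain ⟨L, R, f, g, hh, hT, hL, hR⟩ := w.decomp (X⟦(1 : ℤ)⟧)
    have hge2 : w.ge ((R⟦(-1 : ℤ)⟧)⟦(-1 : ℤ)⟧) := by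
      rw [← h]
      exact geiso ((shiftEquiv C (1 : ℤ)).counitIso.app (R⟦(-1 : ℤ)⟧)).symm hR
    obtain ⟨u, hu⟩ := (shiftFunctor C (1 : ℤ)).map_surjective
      (g ≫ ((shiftEquiv C (1 : ℤ)).counitIso.app R).inv)
    have hu0 : u = 0 := by
      have := w.orth X ((R⟦(-1 : ℤ)⟧)⟦(-1 : ℤ)⟧) hX hge2
        (u ≫ ((shiftEquiv C (1 : ℤ)).counitIso.app (R⟦(-1 : ℤ)⟧)).inv)
      exact ((Iso.comp_inv_eq _).1 this).trans zero_comp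
    have hg0 : g = 0 := by
      have : g ≫ ((shiftEquiv C (1 : ℤ)).counitIso.app R).inv = 0 := by
        exact hu.symm.trans (by rw [hu0, Functor.map_zero]; rfl)
      simpa using this =≫ ((shiftEquiv C (1 : ℤ)).counitIso.app R).hom
    obtain ⟨s, hs⟩ := Triangle.coyoneda_exact₂ _ hT (𝟙 (X⟦(1 : ℤ)⟧))
      (by simp [hg0]; exact Category.id_comp _)
    exact w.le_retract _ _ hL ⟨s, f, hs.symm⟩
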